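/- A directed set P does not have calibre (ω₁, ω) if and only if there is a Tukey quotient from P onto [ω₁]^{<ω}, the set of finite subsets of ω₁ ordered by inclusion. -/

import Mathlib

universe u

open Cardinal

abbrev Ω : Type u := (Cardinal.aleph.{u} 1).ord.ToType

lemma mk_Omega : #Ω = Cardinal.aleph.{u} 1 := by
  rw [Cardinal.mk_toType, Cardinal.card_ord]

lemma Omega_uncountable : ¬ (Set.univ : Set Ω).Countable := by
  rw [Cardinal.countable_iff_lt_aleph_one, Cardinal.mk_univ, mk_Omega]
  exact lt_irrefl _

theorem stmt11 {P : Type u} [PartialOrder P] [IsDirected P (· ≤ ·)] :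
    (¬ ∀ A : Set P, ¬ A.Countable → ∃ B ⊆ A, B.Infinite ∧ BddAbove B) ↔
      ∃ φ : P → Finset (Cardinal.aleph.{u} 1).ord.ToType,
        Monotone φ ∧ ∀ F : Finset (Cardinal.aleph.{u} 1).ord.ToType, ∃ p, F ⊆ φ p := by
  constructor
  · intro h
    push_neg at h
    obtain ⟨A, hA, hB⟩ := h
    have hcard : #Ω ≤ #A := by
      rw [mk_Omega]
      rw [Cardinal.countable_iff_lt_aleph_one, not_lt] at hA
      exact hA
    obtain ⟨f⟩ := hcard
    have hP : Nonempty P := ⟨f (@Classical.arbitrary Ω (by by_contra hne; apply Omega_uncountable; rw [not_nonempty_iff] at hne; rw [Set.univ_eq_empty_iff.mpr hne]; exact Set.countable_empty))⟩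
    -- each set {α | f α ≤ p} is finite
    have hfin : ∀ p : P, {α : Ω | (f α : P) ≤ p}.Finite := by
      intro p
      by_contra hinf
      rw [← Set.not_infinite, not_not] at hinf
      refine hB ((fun α => (f α : P)) '' {α : Ω | (f α : P) ≤ p}) ?_ ?_ ?_
      · rintro x ⟨α, -, rfl⟩; exact (f α).2
      · exact hinf.image (Set.injOn_of_injective (fun a b hab => f.injective (Subtype.ext hab)))
      · exact ⟨p, by rintro x ⟨α, hα, rfl⟩; exact hα⟩
    refine ⟨fun p => (hfin p).toFinset, ?_, ?_⟩
    · intro p q hpq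
      intro α hα
      simp only [Set.Finite.mem_toFinset, Set.mem_setOf_eq] at *
      exact hα.trans hpq
    · intro F
      classical
      obtain ⟨p, hp⟩ := Finset.exists_le (F.image fun α => (f α : P))
      refine ⟨p, fun α hα => ?_⟩
      simp only [Set.Finite.mem_toFinset, Set.mem_setOf_eq]
      exact hp _ (Finset.mem_image_of_mem _ hα)
  · rintro ⟨φ, hmono, hcof⟩ h
    choose g hg using fun α : Ω => hcof {α}
    have hgmem : ∀ α : Ω, α ∈ φ (g α) := fun α => hg α (Finset.mem_singleton_self α)
    have hrange : ¬ (Set.range g).Countable := by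
      intro hc
      apply Omega_uncountable
      have : (Set.univ : Set Ω) ⊆ ⋃ p ∈ Set.range g, {α : Ω | g α = p} := by
        intro α _
        exact Set.mem_biUnion ⟨α, rfl⟩ rfl
      refine Set.Countable.mono this (hc.biUnion fun p _ => ?_)
      have : {α : Ω | g α = p} ⊆ ↑(φ p) := by
        rintro α (rfl : g α = p)
        exact hgmem α
      exact ((φ p).finite_toSet.subset this).countable
    obtain ⟨B, hBA, hBinf, q, hq⟩ := h _ hrange
    choose ι hι using fun b : B => hBA b.2
    have hιinj : Function.Injective ι := by
      intro a b hab
      apply Subtype.ext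
      rw [← hι a, ← hι b, hab]
    have hsub : Set.range ι ⊆ ↑(φ q) := by
      rintro α ⟨b, rfl⟩
      have h1 : (ι b : Ω) ∈ φ (g (ι b)) := hgmem _
      rw [hι b] at h1
      exact hmono (hq b.2) h1
    have hBinf' : Infinite B := hBinf.to_subtype
    have : (Set.range ι).Infinite := Set.infinite_range_of_injective hιinj
    exact this ((φ q).finite_toSet.subset hsub)
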